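/- Let 𝓕 be a family of transcendental entire functions (with D = ℂ) whose Julia like set J(𝓕) is backward invariant (f⁻¹(J(𝓕)) ⊆ J(𝓕) for every f ∈ 𝓕). If J(𝓕) is infinite, then J(𝓕) has no isolated points. -/

import Mathlib

open Filter Topology Set

/-- Locally uniform divergence to `∞` on the set `s`: on every compact subset of `s`,
the moduli eventually exceed every bound, uniformly. -/
def TendstoLocallyUniformlyOnInfty (F : ℕ → ℂ → ℂ) (s : Set ℂ) : Prop :=
  ∀ K ⊆ s, IsCompact K → ∀ M : ℝ, ∀ᶠ n in Filter.atTop, ∀ z ∈ K, M ≤ ‖F n z‖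

/-- The family `𝓕` of functions holomorphic on `D` is normal at `z₀ ∈ D`: there is a
neighborhood `N ⊆ D` of `z₀` on which every sequence from `𝓕` has a subsequence converging
locally uniformly either to a holomorphic function or to `∞`. -/
def NormalAt (D : Set ℂ) (𝓕 : Set (ℂ → ℂ)) (z₀ : ℂ) : Prop :=
  ∃ N, N ⊆ D ∧ N ∈ 𝓝 z₀ ∧ ∀ f : ℕ → ℂ → ℂ, (∀ n, f n ∈ 𝓕) →
    ∃ φ : ℕ → ℕ, StrictMono φ ∧
      ((∃ g : ℂ → ℂ, DifferentiableOn ℂ g N ∧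
          TendstoLocallyUniformlyOn (fun n => f (φ n)) g Filter.atTop N) ∨
        TendstoLocallyUniformlyOnInfty (fun n => f (φ n)) N)

/-- The Fatou like set of `𝓕` on `D`: points of `D` where `𝓕` is normal. -/
def FatouSet (D : Set ℂ) (𝓕 : Set (ℂ → ℂ)) : Set ℂ := {z | z ∈ D ∧ NormalAt D 𝓕 z}

/-- The Julia like set of `𝓕` on `D`. -/
def JuliaSet (D : Set ℂ) (𝓕 : Set (ℂ → ℂ)) : Set ℂ := D \ FatouSet D 𝓕

/-- The backward orbit of `z` with respect to `𝓕`. -/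
def BackwardOrbit (D : Set ℂ) (𝓕 : Set (ℂ → ℂ)) (z : ℂ) : Set ℂ :=
  {w | w ∈ D ∧ ∃ f ∈ 𝓕, f w = z}

/-- The exceptional set of `𝓕`: points with finite backward orbit. -/
def ExceptionalSet (D : Set ℂ) (𝓕 : Set (ℂ → ℂ)) : Set ℂ :=
  {z | (BackwardOrbit D 𝓕 z).Finite}

/-- The escaping like set `I(𝓕)`: points `z ∈ D` such that `f n z → ∞` for every
infinite (i.e. injective) sequence `f` in `𝓕`. -/
def EscapingSet (D : Set ℂ) (𝓕 : Set (ℂ → ℂ)) : Set ℂ :=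
  {z | z ∈ D ∧ ∀ f : ℕ → ℂ → ℂ, (∀ n, f n ∈ 𝓕) → Function.Injective f →
    Filter.Tendsto (fun n => ‖f n z‖) Filter.atTop Filter.atTop}

/-- The generalized escaping like set `U(𝓕)`: points `z ∈ D` such that `f n z → ∞` for some
sequence `f` in `𝓕`. -/
def GenEscapingSet (D : Set ℂ) (𝓕 : Set (ℂ → ℂ)) : Set ℂ :=
  {z | z ∈ D ∧ ∃ f : ℕ → ℂ → ℂ, (∀ n, f n ∈ 𝓕) ∧
    Filter.Tendsto (fun n => ‖f n z‖) Filter.atTop Filter.atTop}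

/-- A transcendental entire function: entire and not a polynomial. -/
def TranscendentalEntire (f : ℂ → ℂ) : Prop :=
  Differentiable ℂ f ∧ ¬ ∃ p : Polynomial ℂ, ∀ z, f z = p.eval z

/-- Boundary of `A` relative to `D`; for `D` open and `A ⊆ D` this coincides with the
boundary of `A` in the subspace topology of `D`. -/
def relBoundary (D A : Set ℂ) : Set ℂ := D ∩ frontier A

/-- Closure of `A` in `D`; for `D` open and `A ⊆ D` this coincides with the closure of `A`
in the subspace topology of `D`. -/
def relClosure (D A : Set ℂ) : Set ℂ := D ∩ closure A

open Metric in
lemma boundBelow {H : ℂ → ℂ} (hH : Differentiable ℂ H) {z₀ : ℂ} {r : ℝ} (hr : 0 < r)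
    {c : ℂ} (hne : ∀ w ∈ closedBall z₀ r, H w ≠ c) {M : ℝ} (hM : ‖c‖ < M)
    (hsp : ∀ x ∈ sphere z₀ r, M ≤ ‖H x‖) :
    ∀ w ∈ closedBall z₀ r, M - 2*‖c‖ ≤ ‖H w‖ := by
  set u : ℂ → ℂ := fun z => (H z - c)⁻¹ with hu
  have hdiff : ∀ w ∈ closedBall z₀ r, DifferentiableAt ℂ u w := fun w hw =>
    ((hH w).sub_const c).inv (sub_ne_zero.mpr (hne w hw))
  have hdc : DiffContOnCl ℂ u (ball z₀ r) := by
    refine ⟨fun w hw => (hdiff w (ball_subset_closedBall hw)).differentiableWithinAt, ?_⟩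
    intro w hw
    rw [closure_ball z₀ hr.ne'] at hw
    exact (hdiff w hw).continuousAt.continuousWithinAt
  have hfr : ∀ z ∈ frontier (ball z₀ r), ‖u z‖ ≤ (M - ‖c‖)⁻¹ := by
    rw [frontier_ball z₀ hr.ne']
    intro z hz
    have h1 : M - ‖c‖ ≤ ‖H z - c‖ := by
      have := norm_sub_norm_le (H z) c
      have := hsp z hz
      linarith
    have hpos : (0:ℝ) < M - ‖c‖ := by linarith
    calc ‖u z‖ = ‖H z - c‖⁻¹ := by rw [hu, norm_inv]
    _ ≤ (M - ‖c‖)⁻¹ := inv_anti₀ hpos h1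
  intro w hw
  have hb := Complex.norm_le_of_forall_mem_frontier_norm_le isBounded_ball hdc hfr
    (by rw [closure_ball z₀ hr.ne']; exact hw)
  have hpos : 0 < ‖H w - c‖ := norm_pos_iff.mpr (sub_ne_zero.mpr (hne w hw))
  have h2 : M - ‖c‖ ≤ ‖H w - c‖ := by
    rw [hu, norm_inv] at hb
    have := (inv_le_inv₀ hpos (by linarith)).mp hb
    linarith
  have h3 : ‖H w - c‖ ≤ ‖H w‖ + ‖c‖ := norm_sub_le (H w) c
  linarith

def Good (F : ℕ → ℂ → ℂ) (s : Set ℂ) : Prop :=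
  (∃ g : ℂ → ℂ, DifferentiableOn ℂ g s ∧
      TendstoLocallyUniformlyOn F g Filter.atTop s) ∨
    TendstoLocallyUniformlyOnInfty F s

lemma tlu_comp {F : ℕ → ℂ → ℂ} {g : ℂ → ℂ} {s : Set ℂ} {φ : ℕ → ℕ}
    (h : TendstoLocallyUniformlyOn F g atTop s) (hφ : StrictMono φ) :
    TendstoLocallyUniformlyOn (fun n => F (φ n)) g atTop s := by
  intro u hu x hx
  obtain ⟨t, ht, hev⟩ := h u hu x hx
  exact ⟨t, ht, hφ.tendsto_atTop.eventually hev⟩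

lemma tluInfty_comp {F : ℕ → ℂ → ℂ} {s : Set ℂ} {φ : ℕ → ℕ}
    (h : TendstoLocallyUniformlyOnInfty F s) (hφ : StrictMono φ) :
    TendstoLocallyUniformlyOnInfty (fun n => F (φ n)) s :=
  fun K hK hKc M => hφ.tendsto_atTop.eventually (h K hK hKc M)

lemma good_comp {F : ℕ → ℂ → ℂ} {s : Set ℂ} {φ : ℕ → ℕ}
    (h : Good F s) (hφ : StrictMono φ) : Good (fun n => F (φ n)) s := by
  rcases h with ⟨g, hg, htlu⟩ | h
  · exact Or.inl ⟨g, hg, tlu_comp htlu hφ⟩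
  · exact Or.inr (tluInfty_comp h hφ)

lemma exists_subseq_good (𝓕 : Set (ℂ → ℂ)) (Nset : ℂ → Set ℂ) (t : Set ℂ) (ht : t.Finite)
    (hd : ∀ i ∈ t, ∀ f : ℕ → ℂ → ℂ, (∀ n, f n ∈ 𝓕) →
      ∃ φ : ℕ → ℕ, StrictMono φ ∧ Good (fun n => f (φ n)) (Nset i)) :
    ∀ f : ℕ → ℂ → ℂ, (∀ n, f n ∈ 𝓕) →
      ∃ φ : ℕ → ℕ, StrictMono φ ∧ ∀ i ∈ t, Good (fun n => f (φ n)) (Nset i) := by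
  revert hd
  refine Set.Finite.induction_on t ht ?_ ?_
  · exact fun _ f _ => ⟨id, strictMono_id, fun i hi => absurd hi (notMem_empty i)⟩
  · rintro a s - - IH hd f hf
    obtain ⟨φ₁, hφ₁, h₁⟩ := IH (fun i hi => hd i (mem_insert_of_mem a hi)) f hf
    obtain ⟨φ₂, hφ₂, h₂⟩ := hd a (mem_insert a s) (fun n => f (φ₁ n)) (fun n => hf _)
    refine ⟨φ₁ ∘ φ₂, hφ₁.comp hφ₂, ?_⟩
    intro i hi
    rcases hi with rfl | hi
    · exact h₂
    · exact good_comp (F := fun n => f (φ₁ n)) (h₁ i hi) hφ₂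


open Metric

/-- If the Julia like set of a family of transcendental entire functions
is backward invariant and infinite, then it has no isolated points. -/
theorem julia_no_isolated_points_of_infinite (𝓕 : Set (ℂ → ℂ))
    (htra : ∀ f ∈ 𝓕, TranscendentalEntire f)
    (hback : ∀ f ∈ 𝓕, f ⁻¹' JuliaSet Set.univ 𝓕 ⊆ JuliaSet Set.univ 𝓕)
    (hinf : (JuliaSet Set.univ 𝓕).Infinite) :
    ∀ z₀ ∈ JuliaSet Set.univ 𝓕, ∀ N ∈ 𝓝 z₀,
      ((N ∩ JuliaSet Set.univ 𝓕) \ {z₀}).Nonempty := by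
  intro z₀ hz₀ N hN
  by_contra hcon
  rw [Set.not_nonempty_iff_eq_empty] at hcon
  set 𝒥 := JuliaSet Set.univ 𝓕 with h𝒥
  have hsub : ∀ x ∈ N, x ∈ 𝒥 → x = z₀ := by
    intro x hxN hxJ
    by_contra hne
    exact (Set.eq_empty_iff_forall_notMem.mp hcon x) ⟨⟨hxN, hxJ⟩, hne⟩
  obtain ⟨r, hr, hrN⟩ : ∃ r > 0, closedBall z₀ r ⊆ N := by
    rcases Metric.mem_nhds_iff.mp hN with ⟨ε, hε, hεN⟩
    exact ⟨ε/2, by positivity, (closedBall_subset_ball (by linarith)).trans hεN⟩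
  have hent : ∀ f ∈ 𝓕, Differentiable ℂ f := fun f hf => (htra f hf).1
  have hmapJ : ∀ f ∈ 𝓕, ∀ w : ℂ, f w ∈ 𝒥 → w ∈ 𝒥 := fun f hf w hw => hback f hf hw
  obtain ⟨c₁, hc₁, c₂, hc₂, hcne⟩ := hinf.nontrivial
  set C := max ‖c₁‖ ‖c₂‖ with hC
  have hC1 : ‖c₁‖ ≤ C := le_max_left _ _
  have hC2 : ‖c₂‖ ≤ C := le_max_right _ _
  have hC0 : 0 ≤ C := le_trans (norm_nonneg c₁) hC1
  have keyLB : ∀ h ∈ 𝓕, ∀ M : ℝ, 0 ≤ M →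
      (∀ x ∈ sphere z₀ r, 2*C + 1 + M ≤ ‖h x‖) → ∀ w ∈ closedBall z₀ r, M ≤ ‖h w‖ := by
    intro h hh M hM hsp
    have hvalcase : ∀ c ∈ 𝒥, (∃ w ∈ closedBall z₀ r, h w = c) → h z₀ = c := by
      rintro c hc ⟨w, hw, hwc⟩
      have hwJ : w ∈ 𝒥 := hmapJ h hh w (by rw [hwc]; exact hc)
      have hwz : w = z₀ := hsub w (hrN hw) hwJ
      rw [← hwz]; exact hwc
    by_cases h1 : ∃ w ∈ closedBall z₀ r, h w = c₁
    · have e1 := hvalcase c₁ hc₁ h1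
      have h2 : ∀ w ∈ closedBall z₀ r, h w ≠ c₂ := by
        intro w hw hwc
        have e2 := hvalcase c₂ hc₂ ⟨w, hw, hwc⟩
        exact hcne (e1 ▸ e2 ▸ rfl)
      intro w hw
      have := boundBelow (hent h hh) hr h2 (M := 2*C+1+M) (by linarith) hsp w hw
      linarith
    · push_neg at h1
      have e1 := hvalcase c₁ hc₁
      intro w hw
      have := boundBelow (hent h hh) hr h1 (M := 2*C+1+M) (by linarith) hsp w hw
      linarith
  have hnorm : ∀ x ∈ sphere z₀ r, ∃ Nx : Set ℂ, Nx ∈ 𝓝 x ∧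
      ∀ f : ℕ → ℂ → ℂ, (∀ n, f n ∈ 𝓕) →
      ∃ φ : ℕ → ℕ, StrictMono φ ∧ Good (fun n => f (φ n)) Nx := by
    intro x hx
    have hxz : x ≠ z₀ := by
      intro e
      rw [mem_sphere, e, dist_self] at hx
      exact hr.ne hx
    have hxF : x ∈ FatouSet Set.univ 𝓕 := by
      by_contra hxF
      exact hxz (hsub x (hrN (sphere_subset_closedBall hx)) ⟨mem_univ x, hxF⟩)
    obtain ⟨Nx, -, hmem, hprop⟩ := hxF.2
    exact ⟨Nx, hmem, hprop⟩
  choose! Nset hNmem hNdich using hnorm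
  have hcov : sphere z₀ r ⊆ ⋃ x ∈ sphere z₀ r, interior (Nset x) := fun x hx =>
    mem_biUnion hx (mem_interior_iff_mem_nhds.mpr (hNmem x hx))
  obtain ⟨t, hts, htfin, htcov⟩ := (isCompact_sphere z₀ r).elim_finite_subcover_image
    (fun x _ => isOpen_interior) hcov
  have hnz₀ : NormalAt Set.univ 𝓕 z₀ := by
    refine ⟨ball z₀ r, subset_univ _, ball_mem_nhds z₀ hr, ?_⟩
    intro f hf
    obtain ⟨φ, hφ, hGood⟩ := exists_subseq_good 𝓕 Nset t htfin
      (fun i hi => hNdich i (hts hi)) f hf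
    refine ⟨φ, hφ, ?_⟩
    set F : ℕ → ℂ → ℂ := fun n => f (φ n) with hFdef
    have hFm : ∀ n, F n ∈ 𝓕 := fun n => hf (φ n)
    have hFent : ∀ n, Differentiable ℂ (F n) := fun n => hent _ (hFm n)
    classical
    set P : ℂ → Prop := fun i => ∃ g : ℂ → ℂ, DifferentiableOn ℂ g (Nset i) ∧
      TendstoLocallyUniformlyOn F g atTop (Nset i) with hP
    set A := ⋃ i ∈ {j | j ∈ t ∧ P j}, interior (Nset i) with hA
    set B := ⋃ i ∈ {j | j ∈ t ∧ ¬ P j}, interior (Nset i) with hB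
    have hAopen : IsOpen A := isOpen_biUnion fun i _ => isOpen_interior
    have hBopen : IsOpen B := isOpen_biUnion fun i _ => isOpen_interior
    have hABcov : sphere z₀ r ⊆ A ∪ B := by
      intro x hx
      obtain ⟨i, hi, hxi⟩ := mem_iUnion₂.mp (htcov hx)
      by_cases hPi : P i
      · exact Or.inl (mem_biUnion ⟨hi, hPi⟩ hxi)
      · exact Or.inr (mem_biUnion ⟨hi, hPi⟩ hxi)
    have hinfty : ∀ i ∈ t, ¬ P i → TendstoLocallyUniformlyOnInfty F (Nset i) := by
      intro i hi hPi
      rcases hGood i hi with h | h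
      · exact absurd h hPi
      · exact h
    have hdisj : Disjoint A B := by
      rw [Set.disjoint_left]
      rintro x hxA hxB
      obtain ⟨i, hiP, hxi⟩ := mem_iUnion₂.mp hxA
      obtain ⟨j, hjP, hxj⟩ := mem_iUnion₂.mp hxB
      obtain ⟨g, hgdiff, hgtlu⟩ := hiP.2
      have h1 : Tendsto (fun n => F n x) atTop (𝓝 (g x)) :=
        hgtlu.tendsto_at (interior_subset hxi)
      have h2 := hinfty j hjP.1 hjP.2 {x} (singleton_subset_iff.mpr (interior_subset hxj))
        isCompact_singleton (‖g x‖ + 1)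
      have h3 : ∀ᶠ n in atTop, ‖F n x‖ < ‖g x‖ + 1 :=
        h1.norm.eventually_lt_const (by linarith)
      obtain ⟨n, hn1, hn2⟩ := (h2.and h3).exists
      have := hn1 x rfl
      linarith
    have hconn : IsPreconnected (sphere z₀ r) :=
      (isConnected_sphere (by rw [Complex.rank_real_complex]; exact Nat.one_lt_ofNat) z₀ hr.le).isPreconnected
    rcases IsPreconnected.subset_or_subset hAopen hBopen hdisj hABcov hconn with hSA | hSB
    · -- convergence case
      refine Or.inl ?_
      have hUC : ∀ x ∈ sphere z₀ r, ∃ ρ > 0, UniformCauchySeqOn F atTop (closedBall x ρ) := by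
        intro x hx
        obtain ⟨j, hjP, hxj⟩ := mem_iUnion₂.mp (hSA hx)
        obtain ⟨g, hgdiff, hgtlu⟩ := hjP.2
        obtain ⟨ρ, hρ, hρsub⟩ := Metric.nhds_basis_closedBall.mem_iff.mp
          (isOpen_interior.mem_nhds hxj)
        have htlu2 : TendstoLocallyUniformlyOn F g atTop (interior (Nset j)) :=
          hgtlu.mono interior_subset
        have := (tendstoLocallyUniformlyOn_iff_forall_isCompact isOpen_interior).mp htlu2
          (closedBall x ρ) hρsub (isCompact_closedBall x ρ)
        exact ⟨ρ, hρ, this.uniformCauchySeqOn⟩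
      choose! ρ hρpos hUCx using hUC
      obtain ⟨u, hus, hufin, hucov⟩ := (isCompact_sphere z₀ r).elim_finite_subcover_image
        (fun x _ => isOpen_ball)
        (fun x hx => mem_biUnion hx (mem_ball_self (hρpos x hx)))
      have hUCS : UniformCauchySeqOn F atTop (sphere z₀ r) := by
        intro v hv
        have hall := (eventually_all_finite hufin).mpr
          (fun x hx => hUCx x (hus hx) v hv)
        refine hall.mono ?_
        rintro ⟨m, n⟩ hmn x hx
        obtain ⟨y, hy, hxy⟩ := mem_iUnion₂.mp (hucov hx)
        exact hmn y hy x (ball_subset_closedBall hxy)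
      have hUCB : UniformCauchySeqOn F atTop (closedBall z₀ r) := by
        rw [Metric.uniformCauchySeqOn_iff] at hUCS ⊢
        intro ε hε
        obtain ⟨Nn, hNn⟩ := hUCS (ε/2) (by linarith)
        refine ⟨Nn, fun m hm n hn x hx => ?_⟩
        have hdd : ∀ y ∈ sphere z₀ r, ‖(F m - F n) y‖ ≤ ε/2 := by
          intro y hy
          have := hNn m hm n hn y hy
          rw [dist_eq_norm] at this
          simpa using this.le
        have hdiffc : DiffContOnCl ℂ (F m - F n) (ball z₀ r) :=
          ((hFent m).sub (hFent n)).diffContOnCl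
        have hle := Complex.norm_le_of_forall_mem_frontier_norm_le isBounded_ball hdiffc
          (by rw [frontier_ball z₀ hr.ne']; exact hdd)
          (by rw [closure_ball z₀ hr.ne']; exact hx)
        rw [dist_eq_norm]
        calc ‖F m x - F n x‖ = ‖(F m - F n) x‖ := rfl
        _ ≤ ε/2 := hle
        _ < ε := by linarith
      have hptw : ∀ x ∈ closedBall z₀ r, ∃ l, Tendsto (fun n => F n x) atTop (𝓝 l) := by
        intro x hx
        apply cauchySeq_tendsto_of_complete
        rw [Metric.cauchySeq_iff]
        intro ε hε
        rw [Metric.uniformCauchySeqOn_iff] at hUCB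
        obtain ⟨Nn, hNn⟩ := hUCB ε hε
        exact ⟨Nn, fun m hm n hn => hNn m hm n hn x hx⟩
      choose! g hg using hptw
      have htuo : TendstoUniformlyOn F g atTop (closedBall z₀ r) :=
        hUCB.tendstoUniformlyOn_of_tendsto hg
      have htlu : TendstoLocallyUniformlyOn F g atTop (ball z₀ r) :=
        htuo.tendstoLocallyUniformlyOn.mono ball_subset_closedBall
      exact ⟨g, htlu.differentiableOn
        (Eventually.of_forall fun n => (hFent n).differentiableOn) isOpen_ball, htlu⟩
    · -- divergence case
      refine Or.inr ?_
      intro K hK hKc M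
      have hptwise : ∀ x ∈ sphere z₀ r, ∃ ρ > 0, ∀ᶠ n in atTop,
          ∀ y ∈ closedBall x ρ, 2*C + 1 + max M 0 ≤ ‖F n y‖ := by
        intro x hx
        obtain ⟨j, hjP, hxj⟩ := mem_iUnion₂.mp (hSB hx)
        obtain ⟨ρ, hρ, hρsub⟩ := Metric.nhds_basis_closedBall.mem_iff.mp
          (isOpen_interior.mem_nhds hxj)
        exact ⟨ρ, hρ, hinfty j hjP.1 hjP.2 (closedBall x ρ)
          (hρsub.trans interior_subset) (isCompact_closedBall x ρ) _⟩
      choose! ρ hρpos hev using hptwise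
      obtain ⟨u, hus, hufin, hucov⟩ := (isCompact_sphere z₀ r).elim_finite_subcover_image
        (fun x _ => isOpen_ball)
        (fun x hx => mem_biUnion hx (mem_ball_self (hρpos x hx)))
      have hev2 : ∀ᶠ n in atTop, ∀ x ∈ u, ∀ y ∈ closedBall x (ρ x),
          2*C + 1 + max M 0 ≤ ‖F n y‖ :=
        (eventually_all_finite hufin).mpr fun x hx => hev x (hus hx)
      refine hev2.mono ?_
      intro n hn z hz
      have hsp : ∀ x ∈ sphere z₀ r, 2*C + 1 + max M 0 ≤ ‖F n x‖ := by
        intro x hx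
        obtain ⟨y, hy, hxy⟩ := mem_iUnion₂.mp (hucov hx)
        exact hn y hy x (ball_subset_closedBall hxy)
      have := keyLB (F n) (hFm n) (max M 0) (le_max_right M 0) hsp z
        (ball_subset_closedBall (hK hz))
      exact le_trans (le_max_left M 0) this
  exact hz₀.2 ⟨mem_univ z₀, hnz₀⟩
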